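/- arXiv:1805.09068 — 2 statements merged into one kernel-verified Lean document; each statement's English description precedes it below -/
import Mathlib

section
/- Verification lemma with an additional VaR constraint: Let ξ be a positive integrable random variable, X₀ > 0, L > 0, β ∈ (0,1), and G : [0,∞) → ℝ measurable. Suppose λ > 0, λ₂ ≥ 0, and X* ≥ 0 satisfy: (a) G(X*(ω)) - λξ(ω)X*(ω) - λ₂𝟙_{X*(ω) < L} = sup_{x≥0}(G(x) - λξ(ω)x - λ₂𝟙_{x<L}) a.e.; (b) E[ξX*] = X₀; (c) λ₂·(ℙ(X* < L) - β) ≥ 0 with ℙ(X* < L) ≤ β. Then for every X ≥ 0 with E[ξX] ≤ X₀ and ℙ(X < L) ≤ β one has E[G(X)] ≤ E[G(X*)]. -/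
open Set MeasureTheory

private lemma aemeas_of_mul {Ω : Type*} [MeasurableSpace Ω] {μ : Measure Ω}
    {ξ Z : Ω → ℝ} (hξ : AEMeasurable ξ μ) (hpos : ∀ᵐ ω ∂μ, 0 < ξ ω)
    (h : AEMeasurable (fun ω => ξ ω * Z ω) μ) : AEMeasurable Z μ := by
  refine (h.div hξ).congr ?_
  filter_upwards [hpos] with ω hω
  simp only [Pi.div_apply]
  field_simp [hω.ne']

private lemma ind_aux {Ω : Type*} [MeasurableSpace Ω] (μ : Measure Ω) [IsProbabilityMeasure μ]
    (Z : Ω → ℝ) (hZ : AEMeasurable Z μ) (L c : ℝ) :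
    Integrable (fun ω => if Z ω < L then c else 0) μ ∧
      ∫ ω, (if Z ω < L then c else 0) ∂μ = (μ {ω | Z ω < L}).toReal * c := by
  set Y := hZ.mk Z with hYdef
  have hYm : Measurable Y := hZ.measurable_mk
  have heq : Z =ᵐ[μ] Y := hZ.ae_eq_mk
  have hs : MeasurableSet {ω | Y ω < L} := measurableSet_lt hYm measurable_const
  have hfun : (fun ω => if Y ω < L then c else 0)
      = Set.indicator {ω | Y ω < L} (fun _ => c) := by
    ext ω; simp [Set.indicator_apply, Set.mem_setOf_eq]
  have hintY : Integrable (fun ω => if Y ω < L then c else 0) μ := by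
    rw [hfun]; exact (integrable_const c).indicator hs
  have haeeq : (fun ω => if Z ω < L then c else 0)
      =ᵐ[μ] (fun ω => if Y ω < L then c else 0) := by
    filter_upwards [heq] with ω h; rw [h]
  have hmeq : μ {ω | Z ω < L} = μ {ω | Y ω < L} := by
    refine measure_congr ?_
    rw [Filter.eventuallyEq_set]
    filter_upwards [heq] with ω h
    simp [Set.mem_setOf_eq, h]
  refine ⟨hintY.congr haeeq.symm, ?_⟩
  rw [integral_congr_ae haeeq, hfun, integral_indicator_const c hs, hmeq, smul_eq_mul,
    mul_comm]
  exact mul_comm _ _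

/-- Verification lemma with an additional VaR (chance) constraint:
with multiplier `lam₂ ≥ 0` on the indicator of default and complementary
slackness, the a.e. pointwise maximizer `X*` of the extended Lagrangian is
optimal among all budget-feasible wealths satisfying `ℙ(X < L) ≤ β`. -/
theorem verification_lemma_VaR
    {Ω : Type*} [MeasurableSpace Ω] (μ : Measure Ω) [IsProbabilityMeasure μ]
    (ξ Xstar : Ω → ℝ) (G : ℝ → ℝ) (lam lam₂ X₀ L β : ℝ)
    (hG : Measurable G)
    (hξpos : ∀ᵐ ω ∂μ, 0 < ξ ω) (hξint : Integrable ξ μ)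
    (hlam : 0 < lam) (hlam₂ : 0 ≤ lam₂) (hX₀ : 0 < X₀) (hL : 0 < L)
    (hβ : β ∈ Ioo (0:ℝ) 1)
    (hXstar_nonneg : ∀ᵐ ω ∂μ, 0 ≤ Xstar ω)
    (hmax : ∀ᵐ ω ∂μ, ∀ x ≥ (0:ℝ),
      G x - lam * ξ ω * x - (if x < L then lam₂ else 0) ≤
        G (Xstar ω) - lam * ξ ω * Xstar ω - (if Xstar ω < L then lam₂ else 0))
    (hbudget_star : ∫ ω, ξ ω * Xstar ω ∂μ = X₀)
    (hVaR_star : (μ {ω | Xstar ω < L}).toReal ≤ β)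
    (hslack : lam₂ * ((μ {ω | Xstar ω < L}).toReal - β) ≥ 0)
    (hint_star : Integrable (fun ω => G (Xstar ω)) μ)
    (hint_star' : Integrable (fun ω => ξ ω * Xstar ω) μ) :
    ∀ X : Ω → ℝ, (∀ᵐ ω ∂μ, 0 ≤ X ω) →
      Integrable (fun ω => G (X ω)) μ →
      Integrable (fun ω => ξ ω * X ω) μ →
      ∫ ω, ξ ω * X ω ∂μ ≤ X₀ →
      (μ {ω | X ω < L}).toReal ≤ β →
      ∫ ω, G (X ω) ∂μ ≤ ∫ ω, G (Xstar ω) ∂μ := by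
  intro X hXnn hintGX hintξX hbudget hVaR
  have hξae : AEMeasurable ξ μ := hξint.1.aemeasurable
  have hXae : AEMeasurable X μ := aemeas_of_mul hξae hξpos hintξX.1.aemeasurable
  have hXsae : AEMeasurable Xstar μ := aemeas_of_mul hξae hξpos hint_star'.1.aemeasurable
  obtain ⟨hIX, hIXval⟩ := ind_aux μ X hXae L lam₂
  obtain ⟨hIS, hISval⟩ := ind_aux μ Xstar hXsae L lam₂
  -- pointwise inequality
  have hpt : ∀ᵐ ω ∂μ,
      G (X ω) - lam * (ξ ω * X ω) - (if X ω < L then lam₂ else 0) ≤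
        G (Xstar ω) - lam * (ξ ω * Xstar ω) - (if Xstar ω < L then lam₂ else 0) := by
    filter_upwards [hmax, hXnn] with ω h hx
    have := h (X ω) hx
    linarith [this, mul_assoc lam (ξ ω) (X ω), mul_assoc lam (ξ ω) (Xstar ω)]
  have hA : Integrable (fun ω => G (X ω) - lam * (ξ ω * X ω)) μ :=
    hintGX.sub (hintξX.const_mul lam)
  have hB : Integrable (fun ω => G (Xstar ω) - lam * (ξ ω * Xstar ω)) μ :=
    hint_star.sub (hint_star'.const_mul lam)
  have hintL : Integrable
      (fun ω => G (X ω) - lam * (ξ ω * X ω) - (if X ω < L then lam₂ else 0)) μ :=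
    hA.sub hIX
  have hintR : Integrable
      (fun ω => G (Xstar ω) - lam * (ξ ω * Xstar ω) - (if Xstar ω < L then lam₂ else 0)) μ :=
    hB.sub hIS
  have hmono := integral_mono_ae hintL hintR hpt
  rw [integral_sub hA hIX, integral_sub hintGX (hintξX.const_mul lam),
      integral_sub hB hIS, integral_sub hint_star (hint_star'.const_mul lam),
      integral_const_mul, integral_const_mul, hbudget_star, hIXval, hISval] at hmono
  have h1 : lam * ∫ ω, ξ ω * X ω ∂μ ≤ lam * X₀ :=
    mul_le_mul_of_nonneg_left hbudget hlam.le
  have h2 : (μ {ω | X ω < L}).toReal * lam₂ ≤ β * lam₂ :=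
    mul_le_mul_of_nonneg_right hVaR hlam₂
  have h3 : lam₂ * β ≤ lam₂ * (μ {ω | Xstar ω < L}).toReal := by nlinarith [hslack]
  nlinarith [hmono, h1, h2, h3]
end

section
/- The concave envelope of the derived utility is affine on the concavified region: Let G : [0,∞) → ℝ be continuous with G(0) = -q, G(x) = U(x - L) for x ∈ [L, L̃] (U strictly increasing, strictly concave, differentiable), and suppose ŷ ∈ (L, L̃) satisfies U(ŷ-L) - U'(ŷ-L)·ŷ + q = 0 and G(x) ≤ U'(ŷ-L)·x - q for all x ∈ [0, ŷ] (tangent-line domination on the concavified region). Then the function G** defined by G**(x) := U'(ŷ-L)·x - q for x ∈ [0, ŷ] and G**(x) := G(x) for x ≥ ŷ is concave on [0, L̃], dominates G, and is the smallest such function on [0, L̃]: any concave H ≥ G on [0, L̃] satisfies H ≥ G** on [0, L̃]. -/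
open Set

/-- The concave envelope of the derived utility is affine on the concavified
region `[0, yhat]` and coincides with `G` beyond the tangency point; it is the
smallest concave function on `[0, Lt]` dominating `G`. -/
theorem concave_envelope_affine_on_concavified_region
    (G U U' : ℝ → ℝ) (L Lt q yhat : ℝ)
    (hL : 0 < L) (hLLt : L < Lt) (hq : 0 ≤ q)
    (hGcont : ContinuousOn G (Ici 0))
    (hG0 : G 0 = -q)
    (hGU : ∀ x ∈ Icc L Lt, G x = U (x - L))
    (hUmono : StrictMonoOn U (Ioi 0))
    (hUconc : StrictConcaveOn ℝ (Ioi 0) U)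
    (hUderiv : ∀ x ∈ Ioi (0:ℝ), HasDerivAt U (U' x) x)
    (hyhat : yhat ∈ Ioo L Lt)
    (htangent : U (yhat - L) - U' (yhat - L) * yhat + q = 0)
    (hdom : ∀ x ∈ Icc 0 yhat, G x ≤ U' (yhat - L) * x - q) :
    let Gss : ℝ → ℝ := fun x => if x ≤ yhat then U' (yhat - L) * x - q else G x
    ConcaveOn ℝ (Icc 0 Lt) Gss ∧
    (∀ x ∈ Icc 0 Lt, G x ≤ Gss x) ∧
    (∀ H : ℝ → ℝ, ConcaveOn ℝ (Icc 0 Lt) H → (∀ x ∈ Icc 0 Lt, G x ≤ H x) →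
      ∀ x ∈ Icc 0 Lt, Gss x ≤ H x) := by
  intro Gss
  set k := U' (yhat - L) with hk
  obtain ⟨hLy, hyLt⟩ := hyhat
  have hy0 : 0 < yhat := hL.trans hLy
  have hyL : 0 < yhat - L := by linarith
  have hGss : ∀ x, Gss x = if x ≤ yhat then k * x - q else G x := fun _ => rfl
  have hky : k * yhat - q = U (yhat - L) := by rw [hk]; linarith
  have hGyhat : G yhat = k * yhat - q := by
    rw [hGU yhat ⟨hLy.le, hyLt.le⟩, hky]
  -- derivative of the line
  have hlineD : ∀ x : ℝ, HasDerivAt (fun y => k * y - q) k x := by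
    intro x
    simpa using ((hasDerivAt_id x).const_mul k).sub_const q
  -- derivative of U (· - L)
  have hUD : ∀ x : ℝ, L < x → HasDerivAt (fun y => U (y - L)) (U' (x - L)) x := by
    intro x hx
    have h1 : HasDerivAt (fun y : ℝ => y - L) 1 x := (hasDerivAt_id x).sub_const L
    have h2 := (hUderiv (x - L) (by simp [mem_Ioi]; linarith)).comp x h1
    rw [mul_one] at h2; exact h2
  -- Gss agrees with U (· - L) on [yhat, Lt]
  have hGssU : ∀ y ∈ Icc yhat Lt, Gss y = U (y - L) := by
    intro y hy
    rw [hGss]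
    rcases le_or_gt y yhat with h | h
    · have : y = yhat := le_antisymm h hy.1
      rw [if_pos h, this, hky]
    · rw [if_neg (not_le.2 h), hGU y ⟨(hLy.trans h).le, hy.2⟩]
  -- derivative of Gss on the interior
  have key : ∀ x ∈ Ioo (0:ℝ) Lt,
      HasDerivAt Gss (if x ≤ yhat then k else U' (x - L)) x := by
    intro x hx
    rcases lt_trichotomy x yhat with h | h | h
    · rw [if_pos h.le]
      refine (hlineD x).congr_of_eventuallyEq ?_
      filter_upwards [Iio_mem_nhds h] with y hy
      rw [hGss, if_pos (le_of_lt hy)]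
    · subst h
      rw [if_pos le_rfl]
      have hleft : HasDerivWithinAt Gss k (Iic x) x := by
        refine (hlineD x).hasDerivWithinAt.congr (fun y hy => ?_) ?_
        · rw [hGss, if_pos (mem_Iic.mp hy)]
        · rw [hGss, if_pos le_rfl]
      have hright : HasDerivWithinAt Gss k (Ici x) x := by
        have hd : HasDerivWithinAt (fun y => U (y - L)) k (Ici x) x := by
          rw [hk]; exact (hUD x hLy).hasDerivWithinAt
        refine hd.congr_of_eventuallyEq ?_ (hGssU x ⟨le_rfl, hyLt.le⟩)
        have hmem : Iio Lt ∈ nhdsWithin x (Ici x) :=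
          nhdsWithin_le_nhds (Iio_mem_nhds hyLt)
        filter_upwards [hmem, self_mem_nhdsWithin] with y hy1 hy2
        exact hGssU y ⟨mem_Ici.mp hy2, le_of_lt hy1⟩
      have := hleft.union hright
      rwa [Iic_union_Ici, hasDerivWithinAt_univ] at this
    · rw [if_neg (not_le.2 h)]
      refine (hUD x (hLy.trans h)).congr_of_eventuallyEq ?_
      filter_upwards [Ioo_mem_nhds h hx.2] with y hy
      rw [hGss, if_neg (not_le.2 hy.1), hGU y ⟨(hLy.trans hy.1).le, hy.2.le⟩]
  -- continuity of Gss on [0, Lt]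
  have hGssCont : ContinuousOn Gss (Icc 0 Lt) := by
    intro x hx
    rcases lt_trichotomy x Lt with hxLt | hxLt | hxLt
    · rcases lt_or_eq_of_le hx.1 with hx0 | hx0
      · exact ((key x ⟨hx0, hxLt⟩).continuousAt).continuousWithinAt
      · -- x = 0
        have hxy : x < yhat := by rw [← hx0]; exact hy0
        have : ContinuousAt Gss x := by
          refine (hlineD x).continuousAt.congr ?_
          filter_upwards [Iio_mem_nhds hxy] with y hy
          rw [hGss, if_pos (le_of_lt hy)]
        exact this.continuousWithinAt
    · -- x = Lt
      subst hxLt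
      have hG : ContinuousWithinAt G (Icc 0 x) x :=
        (hGcont.mono Icc_subset_Ici_self) x hx
      refine hG.congr_of_eventuallyEq ?_ ?_
      · have hmem : Ioi yhat ∈ nhdsWithin x (Icc 0 x) :=
          nhdsWithin_le_nhds (Ioi_mem_nhds hyLt)
        filter_upwards [hmem] with y hy
        rw [hGss, if_neg (not_le.2 hy)]
      · rw [hGss, if_neg (not_le.2 hyLt)]
    · exact absurd hx.2 (not_le.2 hxLt)
  -- U' is strictly antitone on (0, ∞)
  have hU'anti : StrictAntiOn U' (Ioi (0:ℝ)) := by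
    intro a ha b hb hab
    have h := hUconc.strictAntiOn_deriv
      (fun z hz => (hUderiv z hz).differentiableAt) ha hb hab
    rwa [(hUderiv a ha).deriv, (hUderiv b hb).deriv] at h
  -- concavity
  have hconc : ConcaveOn ℝ (Icc 0 Lt) Gss := by
    refine AntitoneOn.concaveOn_of_deriv (convex_Icc 0 Lt) hGssCont ?_ ?_
    · rw [interior_Icc]
      exact fun x hx => (key x hx).differentiableAt.differentiableWithinAt
    · rw [interior_Icc]
      intro a ha b hb hab
      rw [(key a ha).deriv, (key b hb).deriv]
      rcases le_or_gt b yhat with hby | hby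
      · rw [if_pos hby, if_pos (hab.trans hby)]
      · rw [if_neg (not_le.2 hby)]
        rcases le_or_gt a yhat with hay | hay
        · rw [if_pos hay, hk]
          exact le_of_lt (hU'anti (by simpa using hyL)
            (by simp [mem_Ioi]; linarith) (by linarith))
        · rw [if_neg (not_le.2 hay)]
          rcases eq_or_lt_of_le hab with h | h
          · rw [h]
          · exact le_of_lt (hU'anti (by simp [mem_Ioi]; linarith)
              (by simp [mem_Ioi]; linarith) (by linarith))
  refine ⟨hconc, ?_, ?_⟩
  · intro x hx
    rw [hGss]
    rcases le_or_gt x yhat with h | h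
    · rw [if_pos h]; exact hdom x ⟨hx.1, h⟩
    · rw [if_neg (not_le.2 h)]
  · intro H hH hHG x hx
    rw [hGss]
    rcases le_or_gt x yhat with h | h
    · rw [if_pos h]
      set t := x / yhat with htdef
      have ht0 : 0 ≤ t := div_nonneg hx.1 hy0.le
      have ht1 : t ≤ 1 := (div_le_one hy0).2 h
      have htx : t * yhat = x := div_mul_cancel₀ x hy0.ne'
      have h0mem : (0:ℝ) ∈ Icc (0:ℝ) Lt := ⟨le_rfl, by linarith⟩
      have hymem : yhat ∈ Icc (0:ℝ) Lt := ⟨hy0.le, hyLt.le⟩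
      have hcomb := hH.2 h0mem hymem (by linarith : (0:ℝ) ≤ 1 - t) ht0
        (by ring)
      simp only [smul_eq_mul, mul_zero, zero_add, htx] at hcomb
      have h1 : -q ≤ H 0 := by rw [← hG0]; exact hHG 0 h0mem
      have h2 : k * yhat - q ≤ H yhat := by rw [← hGyhat]; exact hHG yhat hymem
      have : k * x - q ≤ (1 - t) * H 0 + t * H yhat := by
        have e : k * x - q = (1 - t) * (-q) + t * (k * yhat - q) := by
          rw [← htx]; ring
        rw [e]
        exact add_le_add (mul_le_mul_of_nonneg_left h1 (by linarith))
          (mul_le_mul_of_nonneg_left h2 ht0)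
      linarith
    · rw [if_neg (not_le.2 h)]
      exact hHG x hx
end
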